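/- arXiv:1310.2752 — 4 statements merged into one kernel-verified Lean document; each statement's English description precedes it below -/
import Mathlib

section
/- For every σ ∈ (−1/2, 0), every μ ≥ 0, every integer k ≥ 1, and all A, B ∈ ℝ^k such that A and B are not both zero when μ = 0, one has ∫₀¹ (μ² + |A + sB|²)^σ ds ≤ (24/(2σ + 1)) · (μ² + |A|² + |B|²)^σ. -/
open MeasureTheory Set

lemma abs_rpow_intervalIntegrable {r : ℝ} (hr : -1 < r) (a b : ℝ) :
    IntervalIntegrable (fun x : ℝ => |x| ^ r) volume a b := by
  have key : ∀ c : ℝ, 0 ≤ c → IntervalIntegrable (fun x : ℝ => |x| ^ r) volume 0 c := by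
    intro c hc
    have h1 : IntervalIntegrable (fun x : ℝ => x ^ r) volume 0 c :=
      intervalIntegral.intervalIntegrable_rpow' hr
    rw [intervalIntegrable_iff] at h1 ⊢
    refine h1.congr_fun ?_ measurableSet_uIoc
    intro x hx
    rw [uIoc_of_le hc] at hx
    simp only []
    rw [abs_of_pos hx.1]
  have key2 : ∀ c : ℝ, IntervalIntegrable (fun x : ℝ => |x| ^ r) volume 0 c := by
    intro c
    rcases le_total 0 c with hc | hc
    · exact key c hc
    · rw [IntervalIntegrable.iff_comp_neg]
      simpa [abs_neg] using key (-c) (by linarith)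
  exact (key2 a).symm.trans (key2 b)

lemma abs_rpow_integral_le {r : ℝ} (hr : -1 < r) (hr1 : r + 1 ≤ 1) (s₀ : ℝ) (hs₀ : |s₀| ≤ 2) :
    (∫ s in (0:ℝ)..1, |s - s₀| ^ r) ≤ 2 * 3 / (r + 1) := by
  have hr0 : 0 < r + 1 := by linarith
  have habs := abs_le.mp hs₀
  have h1 : (∫ s in (0:ℝ)..1, |s - s₀| ^ r)
      = ∫ u in (0 - s₀)..(1 - s₀), |u| ^ r :=
    intervalIntegral.integral_comp_sub_right (fun u => |u| ^ r) s₀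
  have hright : (∫ u in (0:ℝ)..3, |u| ^ r) = 3 ^ (r + 1) / (r + 1) := by
    have heq : (∫ u in (0:ℝ)..3, |u| ^ r) = ∫ u in (0:ℝ)..3, u ^ r := by
      refine intervalIntegral.integral_congr fun x hx => ?_
      rw [uIcc_of_le (by norm_num : (0:ℝ) ≤ 3)] at hx
      show |x| ^ r = x ^ r
      rw [abs_of_nonneg hx.1]
    rw [heq, integral_rpow (Or.inl hr)]
    rw [Real.zero_rpow (by linarith : r + 1 ≠ 0)]
    ring
  have hleft : (∫ u in (-3:ℝ)..0, |u| ^ r) = 3 ^ (r + 1) / (r + 1) := by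
    have := intervalIntegral.integral_comp_neg (a := (0:ℝ)) (b := 3) (fun u => |u| ^ r)
    simp only [abs_neg, neg_zero] at this
    rw [← this]
    exact hright
  have h3 : (∫ u in (-3:ℝ)..3, |u| ^ r) = 2 * (3 ^ (r + 1) / (r + 1)) := by
    rw [← intervalIntegral.integral_add_adjacent_intervals
      (abs_rpow_intervalIntegrable hr (-3) 0) (abs_rpow_intervalIntegrable hr 0 3),
      hleft, hright]
    ring
  have h2 : (∫ u in (0 - s₀)..(1 - s₀), |u| ^ r) ≤ ∫ u in (-3:ℝ)..3, |u| ^ r := by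
    refine intervalIntegral.integral_mono_interval (by linarith) (by linarith) (by linarith)
      (Filter.Eventually.of_forall fun x => Real.rpow_nonneg (abs_nonneg x) _)
      (abs_rpow_intervalIntegrable hr _ _)
  have h4 : (3:ℝ) ^ (r + 1) ≤ 3 := by
    calc (3:ℝ) ^ (r + 1) ≤ (3:ℝ) ^ (1:ℝ) :=
          Real.rpow_le_rpow_of_exponent_le (by norm_num) hr1
      _ = 3 := Real.rpow_one 3
  rw [h1]
  calc (∫ u in (0 - s₀)..(1 - s₀), |u| ^ r) ≤ ∫ u in (-3:ℝ)..3, |u| ^ r := h2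
    _ = 2 * (3 ^ (r + 1) / (r + 1)) := h3
    _ ≤ 2 * 3 / (r + 1) := by
        have h5 : 3 ^ (r + 1) / (r + 1) ≤ 3 / (r + 1) := by gcongr
        rw [show (2:ℝ) * 3 / (r + 1) = 2 * (3 / (r + 1)) by ring]
        linarith

set_option maxHeartbeats 2000000 in
/-- For every `σ ∈ (−1/2, 0)`, every `μ ≥ 0`, every integer `k ≥ 1`, and all
`A, B ∈ ℝ^k` such that `A` and `B` are not both zero when `μ = 0`, one has
`∫₀¹ (μ² + |A + sB|²)^σ ds ≤ (24/(2σ + 1)) · (μ² + |A|² + |B|²)^σ`. -/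
theorem integral_rpow_add_smul_le (k : ℕ) (hk : 1 ≤ k) (σ μ : ℝ)
    (hσ₁ : -(1 / 2) < σ) (hσ₂ : σ < 0) (hμ : 0 ≤ μ)
    (A B : EuclideanSpace ℝ (Fin k)) (hAB : μ = 0 → ¬(A = 0 ∧ B = 0)) :
    (∫ s in (0:ℝ)..1, (μ ^ 2 + ‖A + s • B‖ ^ 2) ^ σ)
      ≤ (24 / (2 * σ + 1)) * (μ ^ 2 + ‖A‖ ^ 2 + ‖B‖ ^ 2) ^ σ := by
  have h2σ : 0 < 2 * σ + 1 := by linarith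
  have h2σ' : -1 < 2 * σ := by linarith
  set c : ℝ := μ ^ 2 + ‖A‖ ^ 2 + ‖B‖ ^ 2 with hc_def
  have hc : 0 < c := by
    rcases eq_or_lt_of_le hμ with h | h
    · rcases not_and_or.mp (hAB h.symm) with h' | h'
      · have hA : 0 < ‖A‖ ^ 2 := pow_pos (norm_pos_iff.mpr h') 2
        nlinarith [sq_nonneg μ, sq_nonneg ‖B‖]
      · have hBB : 0 < ‖B‖ ^ 2 := pow_pos (norm_pos_iff.mpr h') 2
        nlinarith [sq_nonneg μ, sq_nonneg ‖A‖]
    · have : 0 < μ ^ 2 := pow_pos h 2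
      nlinarith [sq_nonneg ‖A‖, sq_nonneg ‖B‖]
  have hcσ : 0 < c ^ σ := Real.rpow_pos_of_pos hc σ
  have h24 : (24:ℝ) ≤ 24 / (2 * σ + 1) := by
    rw [le_div_iff₀ h2σ]; nlinarith
  by_cases hint : IntervalIntegrable (fun s : ℝ => (μ ^ 2 + ‖A + s • B‖ ^ 2) ^ σ) volume 0 1
  swap
  · rw [intervalIntegral.integral_undef hint]
    exact mul_nonneg (div_nonneg (by norm_num) h2σ.le) hcσ.le
  by_cases hB : B = 0
  · have hval : ∀ s : ℝ, A + s • B = A := by intro s; rw [hB, smul_zero, add_zero]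
    simp only [hval]
    rw [intervalIntegral.integral_const]
    simp only [smul_eq_mul, sub_zero, one_mul]
    have hceq : μ ^ 2 + ‖A‖ ^ 2 = c := by rw [hc_def, hB]; simp
    rw [hceq]
    nlinarith [hcσ, h24]
  -- main case : B ≠ 0
  have hb : 0 < ‖B‖ ^ 2 := pow_pos (norm_pos_iff.mpr hB) 2
  set b : ℝ := ‖B‖ ^ 2 with hb_def
  set p : ℝ := inner ℝ A B with hp_def
  set s₀ : ℝ := -p / b with hs₀_def
  have hCS : p ^ 2 ≤ ‖A‖ ^ 2 * b := by
    have h1 := real_inner_mul_inner_self_le A B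
    rw [real_inner_self_eq_norm_sq, real_inner_self_eq_norm_sq] at h1
    rw [hb_def, hp_def]
    nlinarith [h1]
  set M : ℝ := μ ^ 2 + ‖A‖ ^ 2 - b * s₀ ^ 2 with hM_def
  clear_value M s₀ p b c
  have hbne : b ≠ 0 := ne_of_gt hb
  have hM : 0 ≤ M := by
    have h1 : b * s₀ ^ 2 = p ^ 2 / b := by rw [hs₀_def]; field_simp
    have h2 : p ^ 2 / b ≤ ‖A‖ ^ 2 := (div_le_iff₀ hb).mpr hCS
    rw [hM_def, h1]
    nlinarith [sq_nonneg μ]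
  have hcM : c = M + b * (1 + s₀ ^ 2) := by rw [hc_def, hM_def]; ring
  have hkey : ∀ s : ℝ, μ ^ 2 + ‖A + s • B‖ ^ 2 = M + b * (s - s₀) ^ 2 := by
    intro s
    have hexp : ‖A + s • B‖ ^ 2 = ‖A‖ ^ 2 + 2 * (s * p) + s ^ 2 * b := by
      rw [norm_add_sq_real, real_inner_smul_right, norm_smul]
      rw [hp_def, hb_def]
      simp [mul_pow, sq_abs]
    rw [hexp, hM_def, hs₀_def]
    field_simp
    ring
  have hlow : ∀ s ∈ Icc (0:ℝ) 1,
      c * (s - s₀) ^ 2 / (2 * (1 + s₀ ^ 2)) ≤ μ ^ 2 + ‖A + s • B‖ ^ 2 := by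
    intro s hs
    rw [hkey s, hcM]
    have ht : (s - s₀) ^ 2 ≤ 2 * (1 + s₀ ^ 2) := by
      nlinarith [sq_nonneg (s + s₀), hs.1, hs.2]
    have hD : (0:ℝ) < 2 * (1 + s₀ ^ 2) := by positivity
    rw [div_le_iff₀ hD]
    have h5 : M * (s - s₀) ^ 2 ≤ M * (2 * (1 + s₀ ^ 2)) := mul_le_mul_of_nonneg_left ht hM
    have h6 : 0 ≤ b * ((s - s₀) ^ 2 * (1 + s₀ ^ 2)) := by positivity
    have e1 : (M + b * (1 + s₀ ^ 2)) * (s - s₀) ^ 2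
        = M * (s - s₀) ^ 2 + b * ((s - s₀) ^ 2 * (1 + s₀ ^ 2)) := by ring
    have e2 : (M + b * (s - s₀) ^ 2) * (2 * (1 + s₀ ^ 2))
        = M * (2 * (1 + s₀ ^ 2)) + 2 * (b * ((s - s₀) ^ 2 * (1 + s₀ ^ 2))) := by ring
    rw [e1, e2]
    linarith
  rcases le_or_gt |s₀| 2 with hs₀2 | hs₀2
  · -- near case
    set D : ℝ := 2 * (1 + s₀ ^ 2) with hD_def
    have hD0 : (0:ℝ) < D := by positivity
    have hD10 : D ≤ 10 := by
      have := abs_le.mp hs₀2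
      rw [hD_def]; nlinarith [this.1, this.2]
    set K : ℝ := c ^ σ * D ^ (-σ) with hK_def
    have hKeq : K = (c / D) ^ σ := by
      rw [hK_def, Real.div_rpow hc.le hD0.le, Real.rpow_neg hD0.le, div_eq_mul_inv]
    have hK0 : 0 ≤ K := by
      rw [hKeq]; exact Real.rpow_nonneg (by positivity) σ
    have hgint : IntervalIntegrable (fun s : ℝ => K * |s - s₀| ^ (2 * σ)) volume 0 1 := by
      have h1 := (abs_rpow_intervalIntegrable h2σ' (0 - s₀) (1 - s₀)).comp_sub_right s₀
      simp only [sub_add_cancel] at h1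
      exact h1.const_mul K
    have hae : (fun s : ℝ => (μ ^ 2 + ‖A + s • B‖ ^ 2) ^ σ)
        ≤ᵐ[volume.restrict (Icc (0:ℝ) 1)] (fun s : ℝ => K * |s - s₀| ^ (2 * σ)) := by
      have hne : ∀ᵐ s : ℝ, s ≠ s₀ := by
        refine ae_iff.mpr ?_
        simpa using Real.volume_singleton (x := s₀)
      filter_upwards [ae_restrict_of_ae hne, ae_restrict_mem measurableSet_Icc] with s hs hmem
      have hsub : (0:ℝ) < (s - s₀) ^ 2 :=
        lt_of_le_of_ne (sq_nonneg _) (Ne.symm (pow_ne_zero 2 (sub_ne_zero.mpr hs)))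
      have hpos : 0 < c * (s - s₀) ^ 2 / D := by positivity
      have hle := hlow s hmem
      have step1 : (μ ^ 2 + ‖A + s • B‖ ^ 2) ^ σ ≤ (c * (s - s₀) ^ 2 / D) ^ σ :=
        Real.rpow_le_rpow_of_nonpos hpos hle hσ₂.le
      have e1 : c * (s - s₀) ^ 2 / D = (c / D) * |s - s₀| ^ (2:ℝ) := by
        rw [show |s - s₀| ^ (2:ℝ) = |s - s₀| ^ (2:ℕ) from Real.rpow_natCast _ 2, sq_abs]
        ring
      have e2 : (c * (s - s₀) ^ 2 / D) ^ σ = K * |s - s₀| ^ (2 * σ) := by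
        rw [e1, Real.mul_rpow (by positivity) (Real.rpow_nonneg (abs_nonneg _) _),
          ← Real.rpow_mul (abs_nonneg _), hKeq]
      rw [e2] at step1
      exact step1
    have hI : (∫ s in (0:ℝ)..1, |s - s₀| ^ (2 * σ)) ≤ 2 * 3 / (2 * σ + 1) := by
      exact abs_rpow_integral_le (r := 2 * σ) h2σ' (by linarith) s₀ hs₀2
    have hInn : 0 ≤ (∫ s in (0:ℝ)..1, |s - s₀| ^ (2 * σ)) := by
      apply intervalIntegral.integral_nonneg (by norm_num)
      exact fun x _ => Real.rpow_nonneg (abs_nonneg _) _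
    have hDσ : D ^ (-σ) ≤ 4 := by
      have h10 : D ^ (-σ) ≤ (10:ℝ) ^ (-σ) :=
        Real.rpow_le_rpow hD0.le hD10 (by linarith)
      have h11 : (10:ℝ) ^ (-σ) ≤ (10:ℝ) ^ ((1:ℝ)/2) :=
        Real.rpow_le_rpow_of_exponent_le (by norm_num) (by linarith)
      have h12 : (10:ℝ) ^ ((1:ℝ)/2) ≤ (16:ℝ) ^ ((1:ℝ)/2) :=
        Real.rpow_le_rpow (by norm_num) (by norm_num) (by norm_num)
      have h13 : (16:ℝ) ^ ((1:ℝ)/2) = 4 := by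
        rw [show (16:ℝ) = 4 ^ (2:ℕ) by norm_num, ← Real.rpow_natCast (4:ℝ) 2,
          ← Real.rpow_mul (by norm_num)]
        norm_num
      linarith
    calc (∫ s in (0:ℝ)..1, (μ ^ 2 + ‖A + s • B‖ ^ 2) ^ σ)
        ≤ ∫ s in (0:ℝ)..1, K * |s - s₀| ^ (2 * σ) :=
          intervalIntegral.integral_mono_ae_restrict (by norm_num) hint hgint hae
      _ = K * ∫ s in (0:ℝ)..1, |s - s₀| ^ (2 * σ) :=
          intervalIntegral.integral_const_mul K _
      _ ≤ K * (2 * 3 / (2 * σ + 1)) := mul_le_mul_of_nonneg_left hI hK0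
      _ ≤ (c ^ σ * 4) * (2 * 3 / (2 * σ + 1)) := by
          apply mul_le_mul_of_nonneg_right _ (by positivity)
          rw [hK_def]
          exact mul_le_mul_of_nonneg_left hDσ hcσ.le
      _ = 24 / (2 * σ + 1) * c ^ σ := by ring
  · -- far case
    have hge : ∀ s ∈ Icc (0:ℝ) 1, c / 10 ≤ μ ^ 2 + ‖A + s • B‖ ^ 2 := by
      intro s hs
      rw [hkey s, hcM, div_le_iff₀ (by norm_num : (0:ℝ) < 10)]
      rcases lt_abs.mp hs₀2 with h | h
      · have h1 : (s₀ - 1) ^ 2 ≤ (s - s₀) ^ 2 := by nlinarith [hs.1, hs.2]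
        have h2 : 1 + s₀ ^ 2 ≤ 10 * (s₀ - 1) ^ 2 := by nlinarith [sq_nonneg (s₀ - 2)]
        nlinarith [hM, mul_le_mul_of_nonneg_left h1 hb.le,
          mul_le_mul_of_nonneg_left h2 hb.le]
      · have h1 : s₀ ^ 2 ≤ (s - s₀) ^ 2 := by nlinarith [hs.1, hs.2]
        have h2 : 1 + s₀ ^ 2 ≤ 10 * s₀ ^ 2 := by nlinarith
        nlinarith [hM, mul_le_mul_of_nonneg_left h1 hb.le,
          mul_le_mul_of_nonneg_left h2 hb.le]
    have hbound : ∀ s ∈ Icc (0:ℝ) 1,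
        (μ ^ 2 + ‖A + s • B‖ ^ 2) ^ σ ≤ (c / 10) ^ σ := fun s hs =>
      Real.rpow_le_rpow_of_nonpos (by positivity) (hge s hs) hσ₂.le
    have hfin : (c / 10) ^ σ ≤ 24 / (2 * σ + 1) * c ^ σ := by
      have e1 : (c / 10) ^ σ = c ^ σ * (10:ℝ) ^ (-σ) := by
        rw [Real.div_rpow hc.le (by norm_num), Real.rpow_neg (by norm_num), div_eq_mul_inv]
      have e2 : (10:ℝ) ^ (-σ) ≤ 10 := by
        calc (10:ℝ) ^ (-σ) ≤ (10:ℝ) ^ (1:ℝ) :=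
              Real.rpow_le_rpow_of_exponent_le (by norm_num) (by linarith)
          _ = 10 := Real.rpow_one 10
      rw [e1]
      nlinarith [hcσ, h24, mul_le_mul_of_nonneg_left e2 hcσ.le]
    calc (∫ s in (0:ℝ)..1, (μ ^ 2 + ‖A + s • B‖ ^ 2) ^ σ)
        ≤ ∫ _ in (0:ℝ)..1, (c / 10) ^ σ :=
          intervalIntegral.integral_mono_on (by norm_num) hint intervalIntegrable_const hbound
      _ = (c / 10) ^ σ := by simp
      _ ≤ 24 / (2 * σ + 1) * c ^ σ := hfin
end

section
/- Let 1 < p < ∞ and let k ≥ 1 be an integer. There exists a constant c = c(k, p) > 0 such that for all μ ∈ [0,1] and all A, B, C ∈ ℝ^k, not all of μ, A, B, C equal to zero, one has (μ² + |A|² + |C|²)^{(p−2)/2} |A − C|² ≤ c (μ² + |A|² + |B|²)^{(p−2)/2} |A − B|² + c (μ² + |B|² + |C|²)^{(p−2)/2} |B − C|². -/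
set_option maxHeartbeats 1600000


/-- Let `1 < p < ∞` and `k ≥ 1`. There is a constant `c = c(k, p) > 0` such that
for all `μ ∈ [0,1]` and all `A, B, C ∈ ℝ^k`, not all of `μ, A, B, C` zero, one has
`(μ² + |A|² + |C|²)^{(p−2)/2} |A − C|² ≤ c (μ² + |A|² + |B|²)^{(p−2)/2} |A − B|²
  + c (μ² + |B|² + |C|²)^{(p−2)/2} |B − C|²`. -/
theorem rpow_estimate_V_ii (k : ℕ) (hk : 1 ≤ k) (p : ℝ) (hp : 1 < p) :
    ∃ c : ℝ, 0 < c ∧ ∀ μ : ℝ, 0 ≤ μ → μ ≤ 1 →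
      ∀ A B C : EuclideanSpace ℝ (Fin k), ¬(μ = 0 ∧ A = 0 ∧ B = 0 ∧ C = 0) →
        (μ ^ 2 + ‖A‖ ^ 2 + ‖C‖ ^ 2) ^ ((p - 2) / 2) * ‖A - C‖ ^ 2
          ≤ c * ((μ ^ 2 + ‖A‖ ^ 2 + ‖B‖ ^ 2) ^ ((p - 2) / 2) * ‖A - B‖ ^ 2)
            + c * ((μ ^ 2 + ‖B‖ ^ 2 + ‖C‖ ^ 2) ^ ((p - 2) / 2) * ‖B - C‖ ^ 2) := by
  set q : ℝ := (p - 2) / 2 with hqdef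
  have hq : -(1/2 : ℝ) < q := by rw [hqdef]; linarith
  have h9 : (0:ℝ) < (9:ℝ) ^ q := Real.rpow_pos_of_pos (by norm_num) q
  refine ⟨20 + 4 * (9:ℝ) ^ q, by positivity, ?_⟩
  intro μ hμ0 hμ1 A B C hABC
  set c : ℝ := 20 + 4 * (9:ℝ) ^ q with hc
  have hc10 : (10:ℝ) ≤ c := by rw [hc]; clear hc; nlinarith
  have hc0 : (0:ℝ) ≤ c := by linarith
  have hc1 : (1:ℝ) ≤ c := by linarith
  have hc9 : 4 * (9:ℝ) ^ q ≤ c := by rw [hc]; linarith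
  set x := ‖A‖ with hxd
  set y := ‖B‖ with hyd
  set z := ‖C‖ with hzd
  set a := ‖A - B‖ with had
  set b := ‖B - C‖ with hbd
  set d := ‖A - C‖ with hdd
  have hx0 : 0 ≤ x := norm_nonneg _
  have hy0 : 0 ≤ y := norm_nonneg _
  have hz0 : 0 ≤ z := norm_nonneg _
  have ha0 : 0 ≤ a := norm_nonneg _
  have hb0 : 0 ≤ b := norm_nonneg _
  have hd0 : 0 ≤ d := norm_nonneg _
  have htri : d ≤ a + b := by
    rw [hdd, had, hbd]; simpa using norm_add_le (A - B) (B - C)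
  have hzb : z ≤ y + b := by
    rw [hzd, hyd, hbd]; simpa using norm_sub_le B (B - C)
  have hxa : x ≤ y + a := by
    rw [hxd, hyd, had]
    have := norm_add_le (A - B) B
    simpa [add_comm] using this
  have hyx : y ≤ x + a := by
    rw [hxd, hyd, had]; simpa using norm_sub_le A (A - B)
  have hyz : y ≤ z + b := by
    rw [hzd, hyd, hbd]
    have h1 : ‖B - C‖ = ‖C - B‖ := norm_sub_rev B C
    have h2 := norm_sub_le C (C - B)
    simp only [sub_sub_cancel] at h2
    linarith
  have hab : a ≤ x + y := norm_sub_le A B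
  have hbc : b ≤ y + z := norm_sub_le B C
  have hac : d ≤ x + z := norm_sub_le A C
  set s := μ ^ 2 + x ^ 2 + z ^ 2 with hsd
  set s1 := μ ^ 2 + x ^ 2 + y ^ 2 with hs1d
  set s2 := μ ^ 2 + y ^ 2 + z ^ 2 with hs2d
  have hs0 : 0 ≤ s := by positivity
  have hs10 : 0 ≤ s1 := by positivity
  have hs20 : 0 ≤ s2 := by positivity
  clear_value x y z a b d s s1 s2 q c
  clear hABC hxd hyd hzd had hbd hdd A B C hk hp hqdef hμ0 hμ1
  have ht1 : 0 ≤ s1 ^ q * a ^ 2 := by positivity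
  have ht2 : 0 ≤ s2 ^ q * b ^ 2 := by positivity
  have hct2 : 0 ≤ c * (s2 ^ q * b ^ 2) := mul_nonneg hc0 ht2
  have hct1 : 0 ≤ c * (s1 ^ q * a ^ 2) := mul_nonneg hc0 ht1
  rcases le_or_gt 0 q with hq0 | hq0
  · -- case p ≥ 2
    rcases le_total b a with hba | hba
    · have hz2 : z ^ 2 ≤ (x + 2 * y) ^ 2 := pow_le_pow_left₀ hz0 (by linarith) 2
      have hs9 : s ≤ 9 * s1 := by
        clear ht1 ht2 hct1 hct2 h9 hc hc10 hc0 hc1 hc9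
        nlinarith [sq_nonneg (x - 2*y)]
      have hd2 : d ^ 2 ≤ 4 * a ^ 2 := by
        have h := pow_le_pow_left₀ hd0 (show d ≤ 2 * a by linarith) 2
        clear ht1 ht2 hct1 hct2 h9 hc hc10 hc0 hc1 hc9
        nlinarith
      have hsq : s ^ q ≤ (9:ℝ) ^ q * s1 ^ q := by
        rw [← Real.mul_rpow (by norm_num) hs10]
        exact Real.rpow_le_rpow hs0 hs9 hq0
      calc s ^ q * d ^ 2 ≤ ((9:ℝ) ^ q * s1 ^ q) * (4 * a ^ 2) :=
            mul_le_mul hsq hd2 (sq_nonneg d) (by positivity)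
        _ = (4 * (9:ℝ) ^ q) * (s1 ^ q * a ^ 2) := by ring
        _ ≤ c * (s1 ^ q * a ^ 2) := mul_le_mul_of_nonneg_right hc9 ht1
        _ ≤ c * (s1 ^ q * a ^ 2) + c * (s2 ^ q * b ^ 2) := le_add_of_nonneg_right hct2
    · have hx2 : x ^ 2 ≤ (z + 2 * y) ^ 2 := pow_le_pow_left₀ hx0 (by linarith) 2
      have hs9 : s ≤ 9 * s2 := by
        clear ht1 ht2 hct1 hct2 h9 hc hc10 hc0 hc1 hc9
        nlinarith [sq_nonneg (z - 2*y)]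
      have hd2 : d ^ 2 ≤ 4 * b ^ 2 := by
        have h := pow_le_pow_left₀ hd0 (show d ≤ 2 * b by linarith) 2
        clear ht1 ht2 hct1 hct2 h9 hc hc10 hc0 hc1 hc9
        nlinarith
      have hsq : s ^ q ≤ (9:ℝ) ^ q * s2 ^ q := by
        rw [← Real.mul_rpow (by norm_num) hs20]
        exact Real.rpow_le_rpow hs0 hs9 hq0
      calc s ^ q * d ^ 2 ≤ ((9:ℝ) ^ q * s2 ^ q) * (4 * b ^ 2) :=
            mul_le_mul hsq hd2 (sq_nonneg d) (by positivity)
        _ = (4 * (9:ℝ) ^ q) * (s2 ^ q * b ^ 2) := by ring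
        _ ≤ c * (s2 ^ q * b ^ 2) := mul_le_mul_of_nonneg_right hc9 ht2
        _ ≤ c * (s1 ^ q * a ^ 2) + c * (s2 ^ q * b ^ 2) := le_add_of_nonneg_left hct1
  · -- case 1 < p < 2
    have hq1 : -q ≤ 1 := by linarith
    rcases eq_or_lt_of_le hs0 with hs | hs
    · -- s = 0
      have hx : x = 0 := by clear ht1 ht2 hct1 hct2 h9 hc hc10 hc0 hc1 hc9; nlinarith
      have hz : z = 0 := by clear ht1 ht2 hct1 hct2 h9 hc hc10 hc0 hc1 hc9; nlinarith
      have hdz : d = 0 := le_antisymm (by linarith) hd0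
      rw [hdz]
      simpa using add_nonneg hct1 hct2
    rcases eq_or_lt_of_le hs10 with hs1 | hs1
    · -- s1 = 0 : μ = x = y = 0
      have hx : x = 0 := by clear ht1 ht2 hct1 hct2 h9 hc hc10 hc0 hc1 hc9; nlinarith
      have hy : y = 0 := by clear ht1 ht2 hct1 hct2 h9 hc hc10 hc0 hc1 hc9; nlinarith
      have hμ : μ = 0 := by clear ht1 ht2 hct1 hct2 h9 hc hc10 hc0 hc1 hc9; nlinarith
      have hdb : d ^ 2 ≤ b ^ 2 := by
        clear ht1 ht2 hct1 hct2 h9 hc hc10 hc0 hc1 hc9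
        nlinarith
      have hss2 : s = s2 := by rw [hsd, hs2d, hx, hy]
      have key : s ^ q * d ^ 2 ≤ s2 ^ q * b ^ 2 := by
        rw [← hss2]
        exact mul_le_mul_of_nonneg_left hdb (Real.rpow_nonneg hs0 q)
      have : s2 ^ q * b ^ 2 ≤ c * (s2 ^ q * b ^ 2) := le_mul_of_one_le_left ht2 hc1
      linarith
    rcases eq_or_lt_of_le hs20 with hs2 | hs2
    · -- s2 = 0 : μ = y = z = 0
      have hz : z = 0 := by clear ht1 ht2 hct1 hct2 h9 hc hc10 hc0 hc1 hc9; nlinarith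
      have hy : y = 0 := by clear ht1 ht2 hct1 hct2 h9 hc hc10 hc0 hc1 hc9; nlinarith
      have hμ : μ = 0 := by clear ht1 ht2 hct1 hct2 h9 hc hc10 hc0 hc1 hc9; nlinarith
      have hda : d ^ 2 ≤ a ^ 2 := by
        clear ht1 ht2 hct1 hct2 h9 hc hc10 hc0 hc1 hc9
        nlinarith
      have hss1 : s = s1 := by rw [hsd, hs1d, hy, hz]
      have key : s ^ q * d ^ 2 ≤ s1 ^ q * a ^ 2 := by
        rw [← hss1]
        exact mul_le_mul_of_nonneg_left hda (Real.rpow_nonneg hs0 q)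
      have : s1 ^ q * a ^ 2 ≤ c * (s1 ^ q * a ^ 2) := le_mul_of_one_le_left ht1 hc1
      linarith
    -- now s, s1, s2 > 0
    have h5q : (5:ℝ) ^ (-q) ≤ 5 := by
      calc (5:ℝ) ^ (-q) ≤ (5:ℝ) ^ (1:ℝ) :=
            Real.rpow_le_rpow_of_exponent_le (by norm_num) hq1
        _ = 5 := Real.rpow_one 5
    rcases le_or_gt (y ^ 2) (4 * s) with hB | hB
    · -- moderate |B|
      have hle1 : s1 ≤ 5 * s := by
        clear ht1 ht2 hct1 hct2 h9 hc hc10 hc0 hc1 hc9 h5q; nlinarith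
      have hle2 : s2 ≤ 5 * s := by
        clear ht1 ht2 hct1 hct2 h9 hc hc10 hc0 hc1 hc9 h5q; nlinarith
      have hdq : d ^ 2 ≤ 2 * a ^ 2 + 2 * b ^ 2 := by
        have h := pow_le_pow_left₀ hd0 htri 2
        clear ht1 ht2 hct1 hct2 h9 hc hc10 hc0 hc1 hc9 h5q
        nlinarith [sq_nonneg (a - b)]
      have hbig : ∀ t : ℝ, 0 < t → t ≤ 5 * s → s ^ q ≤ 5 * t ^ q := by
        intro t ht htle
        have h1 : (5 * s) ^ q ≤ t ^ q := Real.rpow_le_rpow_of_nonpos ht htle hq0.le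
        have h2 : (5 * s) ^ q = (5:ℝ) ^ q * s ^ q := Real.mul_rpow (by norm_num) hs0
        have h3 : s ^ q = (5:ℝ) ^ (-q) * ((5:ℝ) ^ q * s ^ q) := by
          rw [← mul_assoc, ← Real.rpow_add (by norm_num : (0:ℝ) < 5)]
          simp
        rw [h3]
        calc (5:ℝ) ^ (-q) * ((5:ℝ) ^ q * s ^ q) ≤ (5:ℝ) ^ (-q) * t ^ q := by
              rw [h2] at h1
              exact mul_le_mul_of_nonneg_left h1 (Real.rpow_nonneg (by norm_num) _)
          _ ≤ 5 * t ^ q := mul_le_mul_of_nonneg_right h5q (Real.rpow_nonneg ht.le q)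
      have h51 := hbig s1 hs1 hle1
      have h52 := hbig s2 hs2 hle2
      have hsq0 : 0 ≤ s ^ q := Real.rpow_nonneg hs0 q
      have step : s ^ q * d ^ 2 ≤ 2 * (s ^ q * a ^ 2) + 2 * (s ^ q * b ^ 2) := by
        have := mul_le_mul_of_nonneg_left hdq hsq0
        linarith [this]
      have e1 : s ^ q * a ^ 2 ≤ 5 * (s1 ^ q * a ^ 2) := by
        have := mul_le_mul_of_nonneg_right h51 (sq_nonneg a)
        linarith [this]
      have e2 : s ^ q * b ^ 2 ≤ 5 * (s2 ^ q * b ^ 2) := by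
        have := mul_le_mul_of_nonneg_right h52 (sq_nonneg b)
        linarith [this]
      have f1 : (10:ℝ) * (s1 ^ q * a ^ 2) ≤ c * (s1 ^ q * a ^ 2) :=
        mul_le_mul_of_nonneg_right hc10 ht1
      have f2 : (10:ℝ) * (s2 ^ q * b ^ 2) ≤ c * (s2 ^ q * b ^ 2) :=
        mul_le_mul_of_nonneg_right hc10 ht2
      linarith
    · -- |B| large
      have hx2s : x ^ 2 ≤ s := by
        clear ht1 ht2 hct1 hct2 h9 hc hc10 hc0 hc1 hc9 h5q
        nlinarith [sq_nonneg μ, sq_nonneg z]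
      have h2x : 2 * x ≤ y := by
        by_contra hcon
        push_neg at hcon
        have := pow_le_pow_left₀ hy0 hcon.le 2
        clear ht1 ht2 hct1 hct2 h9 hc hc10 hc0 hc1 hc9 h5q
        nlinarith
      have hya : y ≤ 2 * a := by linarith
      have hd2s : d ^ 2 ≤ 2 * s := by
        have h := pow_le_pow_left₀ hd0 hac 2
        clear ht1 ht2 hct1 hct2 h9 hc hc10 hc0 hc1 hc9 h5q
        nlinarith [sq_nonneg (x - z), sq_nonneg μ]
      have hs1a : s1 ≤ 5 * a ^ 2 := by
        have h := pow_le_pow_left₀ hy0 hya 2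
        clear ht1 ht2 hct1 hct2 h9 hc hc10 hc0 hc1 hc9 h5q
        nlinarith
      have hss1 : s ≤ s1 := by
        clear ht1 ht2 hct1 hct2 h9 hc hc10 hc0 hc1 hc9 h5q
        nlinarith
      have hq10 : (0:ℝ) ≤ q + 1 := by linarith
      have hpow : s ^ (q + 1) ≤ s1 ^ (q + 1) := Real.rpow_le_rpow hs0 hss1 hq10
      have hsplit : s ^ (q + 1) = s ^ q * s := Real.rpow_add_one (ne_of_gt hs) q
      have hsplit1 : s1 ^ (q + 1) = s1 ^ q * s1 := Real.rpow_add_one (ne_of_gt hs1) q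
      have hsq0 : 0 ≤ s ^ q := Real.rpow_nonneg hs0 q
      have hs1q0 : 0 ≤ s1 ^ q := Real.rpow_nonneg hs10 q
      have step1 : s ^ q * d ^ 2 ≤ 2 * (s ^ q * s) := by
        have := mul_le_mul_of_nonneg_left hd2s hsq0
        linarith [this]
      have step2 : s ^ q * s ≤ s1 ^ q * s1 := by rw [← hsplit, ← hsplit1]; exact hpow
      have step3 : s1 ^ q * s1 ≤ s1 ^ q * (5 * a ^ 2) :=
        mul_le_mul_of_nonneg_left hs1a hs1q0
      have f1 : (10:ℝ) * (s1 ^ q * a ^ 2) ≤ c * (s1 ^ q * a ^ 2) :=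
        mul_le_mul_of_nonneg_right hc10 ht1
      have hrw : s1 ^ q * (5 * a ^ 2) = 5 * (s1 ^ q * a ^ 2) := by ring
      linarith [hrw ▸ step3]
end

section
/- Let k ≥ 1 be an integer, 1 < p < ∞, μ ∈ [0,1] and 0 < ν ≤ L. There exists a constant c = c(k, p) ≥ 1 such that the following holds: whenever b : ℝ^k → ℝ^k is continuous on ℝ^k and differentiable at every ξ ≠ 0 (at every ξ ∈ ℝ^k if μ > 0), with derivative Db satisfying the growth bound |Db(ξ)| ≤ L (μ² + |ξ|²)^{(p−2)/2} and the ellipticity bound ⟨Db(ξ)ζ, ζ⟩ ≥ ν (μ² + |ξ|²)^{(p−2)/2} |ζ|² for all such ξ and all ζ ∈ ℝ^k, then for all ξ, ξ₀ ∈ ℝ^k (not both zero when μ = 0) one has the monotonicity inequality ⟨b(ξ) − b(ξ₀), ξ − ξ₀⟩ ≥ (ν/c) (μ² + |ξ|² + |ξ₀|²)^{(p−2)/2} |ξ − ξ₀|². -/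
set_option maxHeartbeats 1000000

open Set

lemma mvt0 {g g' : ℝ → ℝ} {a b C : ℝ} (hab : a ≤ b) (hcont : ContinuousOn g (Set.Icc a b))
    (hderiv : ∀ t ∈ Set.Ioo a b, HasDerivAt g (g' t) t)
    (hC : ∀ t ∈ Set.Ioo a b, C ≤ g' t) : C * (b - a) ≤ g b - g a := by
  have hint : MeasureTheory.IntegrableOn (fun _ : ℝ => C) (Set.Icc a b) :=
    MeasureTheory.integrableOn_const measure_Icc_lt_top.ne enorm_ne_top
  have h := intervalIntegral.integral_le_sub_of_hasDeriv_right_of_le hab hcont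
    (fun t ht => (hderiv t ht).hasDerivWithinAt) hint (fun t ht => hC t ht)
  rw [intervalIntegral.integral_const, smul_eq_mul] at h
  linarith [h]

lemma mvt1 {g g' : ℝ → ℝ} {a b C : ℝ} (t₀ : ℝ) (hab : a ≤ b)
    (hcont : ContinuousOn g (Set.Icc a b))
    (hderiv : ∀ t ∈ Set.Ioo a b, t ≠ t₀ → HasDerivAt g (g' t) t)
    (hC : ∀ t ∈ Set.Ioo a b, t ≠ t₀ → C ≤ g' t) : C * (b - a) ≤ g b - g a := by
  by_cases ht₀ : t₀ ∈ Set.Ioo a b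
  · have h1 : C * (t₀ - a) ≤ g t₀ - g a := by
      refine mvt0 (g' := g') ht₀.1.le (hcont.mono (Set.Icc_subset_Icc le_rfl ht₀.2.le)) ?_ ?_
      · exact fun t ht => hderiv t ⟨ht.1, ht.2.trans ht₀.2⟩ ht.2.ne
      · exact fun t ht => hC t ⟨ht.1, ht.2.trans ht₀.2⟩ ht.2.ne
    have h2 : C * (b - t₀) ≤ g b - g t₀ := by
      refine mvt0 (g' := g') ht₀.2.le (hcont.mono (Set.Icc_subset_Icc ht₀.1.le le_rfl)) ?_ ?_
      · exact fun t ht => hderiv t ⟨ht₀.1.trans ht.1, ht.2⟩ ht.1.ne'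
      · exact fun t ht => hC t ⟨ht₀.1.trans ht.1, ht.2⟩ ht.1.ne'
    linarith
  · exact mvt0 hab hcont (fun t ht => hderiv t ht (fun h => ht₀ (h ▸ ht)))
      (fun t ht => hC t ht (fun h => ht₀ (h ▸ ht)))

open scoped Classical in
lemma aux_mono {E : Type*} [NormedAddCommGroup E] [InnerProductSpace ℝ E]
    {p μ ν : ℝ} (hν : 0 < ν)
    {b : E → E} {Db : E → (E →L[ℝ] E)}
    (hb : Continuous b)
    (hb' : ∀ ξ : E, (ξ ≠ 0 ∨ 0 < μ) → HasFDerivAt b (Db ξ) ξ)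
    (hell : ∀ ξ : E, (ξ ≠ 0 ∨ 0 < μ) → ∀ ζ : E,
      ν * (μ ^ 2 + ‖ξ‖ ^ 2) ^ ((p - 2) / 2) * ‖ζ‖ ^ 2 ≤ (inner ℝ (Db ξ ζ) ζ : ℝ))
    (ξ ξ₀ : E) (hne : ξ ≠ ξ₀) (hord : ‖ξ₀‖ ≤ ‖ξ‖)
    (hX : 0 < μ ^ 2 + ‖ξ‖ ^ 2 + ‖ξ₀‖ ^ 2) :
    (ν / (4 * (8:ℝ) ^ ((p - 2) / 2) + 1)) * (μ ^ 2 + ‖ξ‖ ^ 2 + ‖ξ₀‖ ^ 2) ^ ((p - 2) / 2)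
        * ‖ξ - ξ₀‖ ^ 2 ≤ (inner ℝ (b ξ - b ξ₀) (ξ - ξ₀) : ℝ) := by
  set s : ℝ := (p - 2) / 2 with hs
  set X : ℝ := μ ^ 2 + ‖ξ‖ ^ 2 + ‖ξ₀‖ ^ 2 with hXdef
  set d : E := ξ - ξ₀ with hddef
  have hd : d ≠ 0 := sub_ne_zero.2 hne
  have h8 : (0:ℝ) < (8:ℝ) ^ s := Real.rpow_pos_of_pos (by norm_num) s
  set c : ℝ := 4 * (8:ℝ) ^ s + 1 with hcdef
  have hc1 : (1:ℝ) ≤ c := by nlinarith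
  have hcpos : (0:ℝ) < c := by linarith
  set γ : ℝ → E := fun t => ξ₀ + t • d with hγdef
  set g : ℝ → ℝ := fun t => (inner ℝ (b (γ t)) d : ℝ) with hgdef
  set g' : ℝ → ℝ := fun t => (inner ℝ (Db (γ t) d) d : ℝ) with hg'def
  -- the (at most one) exceptional parameter
  set t₀ : ℝ := if h : ∃ t : ℝ, γ t = 0 then h.choose else 0 with ht₀def
  have hzero : ∀ t : ℝ, γ t = 0 → t = t₀ := by
    intro t ht
    have hex : ∃ u : ℝ, γ u = 0 := ⟨t, ht⟩
    have ht₀ : γ t₀ = 0 := by rw [ht₀def, dif_pos hex]; exact hex.choose_spec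
    have : (t - t₀) • d = 0 := by
      have := sub_eq_zero.2 (ht.trans ht₀.symm)
      simpa [hγdef, sub_smul, add_sub_add_left_eq_sub] using this
    rcases smul_eq_zero.1 this with h | h
    · linarith [sub_eq_zero.1 (by exact_mod_cast h)]
    · exact absurd h hd
  have hP : ∀ t : ℝ, t ≠ t₀ → (γ t ≠ 0 ∨ 0 < μ) :=
    fun t ht => Or.inl (fun h0 => ht (hzero t h0))
  have hXt : ∀ t : ℝ, t ≠ t₀ → 0 < μ ^ 2 + ‖γ t‖ ^ 2 := by
    intro t ht
    rcases hP t ht with h | h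
    · have := norm_pos_iff.2 h
      nlinarith [sq_nonneg μ]
    · nlinarith [sq_nonneg ‖γ t‖]
  have hγcont : Continuous γ := continuous_const.add (continuous_id.smul continuous_const)
  have hgcont : Continuous g := (hb.comp hγcont).inner continuous_const
  have hgderiv : ∀ t : ℝ, t ≠ t₀ → HasDerivAt g (g' t) t := by
    intro t ht
    have hγd : HasDerivAt γ d t := by
      simpa only [one_smul, hγdef, id] using ((hasDerivAt_id t).smul_const d).const_add ξ₀
    have h1 : HasDerivAt (fun u => b (γ u)) (Db (γ t) d) t :=
      (hb' (γ t) (hP t ht)).comp_hasDerivAt t hγd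
    have h2 := h1.inner ℝ (hasDerivAt_const t d)
    simpa [hgdef, hg'def] using h2
  have hlow : ∀ t : ℝ, t ≠ t₀ →
      ν * (μ ^ 2 + ‖γ t‖ ^ 2) ^ s * ‖d‖ ^ 2 ≤ g' t :=
    fun t ht => hell (γ t) (hP t ht) d
  -- value identities
  have hγ0 : γ 0 = ξ₀ := by simp [hγdef]
  have hγ1 : γ 1 = ξ := by simp [hγdef, hddef]
  have hsum : g 1 - g 0 = (inner ℝ (b ξ - b ξ₀) (ξ - ξ₀) : ℝ) := by
    rw [hgdef]
    simp only [hγ0, hγ1]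
    rw [← inner_sub_left]
  -- norm bounds along the segment
  have hγconv : ∀ t : ℝ, γ t = (1 - t) • ξ₀ + t • ξ := by
    intro t; rw [hγdef, hddef]; module
  have hγup : ∀ t ∈ Set.Icc (0:ℝ) 1, ‖γ t‖ ≤ ‖ξ‖ := by
    intro t ht
    rw [hγconv t]
    calc ‖(1 - t) • ξ₀ + t • ξ‖ ≤ ‖(1 - t) • ξ₀‖ + ‖t • ξ‖ := norm_add_le _ _
      _ = (1 - t) * ‖ξ₀‖ + t * ‖ξ‖ := by
          rw [norm_smul, norm_smul, Real.norm_eq_abs, Real.norm_eq_abs,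
            abs_of_nonneg (by linarith [ht.2]), abs_of_nonneg ht.1]
      _ ≤ ‖ξ‖ := by nlinarith [ht.1, ht.2, norm_nonneg ξ₀]
  have hγlo : ∀ t ∈ Set.Icc (3/4 : ℝ) 1, ‖ξ‖ / 2 ≤ ‖γ t‖ := by
    intro t ht
    have hrepr : γ t = ξ - (1 - t) • d := by rw [hγdef, hddef]; module
    have h1 : ‖ξ‖ - ‖(1 - t) • d‖ ≤ ‖γ t‖ := by
      rw [hrepr]; exact norm_sub_norm_le _ _ |>.trans (le_of_eq rfl) |>.trans (le_refl _) |>.trans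
        (le_of_eq rfl)
    have h2 : ‖(1 - t) • d‖ = (1 - t) * ‖d‖ := by
      rw [norm_smul, Real.norm_eq_abs, abs_of_nonneg (by linarith [ht.2])]
    have h3 : ‖d‖ ≤ 2 * ‖ξ‖ := by
      calc ‖d‖ ≤ ‖ξ‖ + ‖ξ₀‖ := norm_sub_le _ _
        _ ≤ 2 * ‖ξ‖ := by linarith
    nlinarith [ht.1, ht.2, norm_nonneg d]
  rcases le_total p 2 with hp2 | hp2
  · -- singular case: s ≤ 0
    have hsle : s ≤ 0 := by rw [hs]; linarith
    have hXs : 0 < X ^ s := Real.rpow_pos_of_pos hX s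
    have key : ν * X ^ s * ‖d‖ ^ 2 * (1 - 0) ≤ g 1 - g 0 := by
      refine mvt1 (g' := g') t₀ (by norm_num) hgcont.continuousOn
        (fun t ht htne => hgderiv t htne) ?_
      intro t ht htne
      have h1 : μ ^ 2 + ‖γ t‖ ^ 2 ≤ X := by
        have := hγup t ⟨ht.1.le, ht.2.le⟩
        nlinarith [norm_nonneg (γ t), norm_nonneg ξ₀, norm_nonneg ξ]
      have h2 : X ^ s ≤ (μ ^ 2 + ‖γ t‖ ^ 2) ^ s :=
        Real.rpow_le_rpow_of_nonpos (hXt t htne) h1 hsle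
      calc ν * X ^ s * ‖d‖ ^ 2 = ν * X ^ s * ‖d‖ ^ 2 := rfl
        _ ≤ ν * (μ ^ 2 + ‖γ t‖ ^ 2) ^ s * ‖d‖ ^ 2 :=
            mul_le_mul_of_nonneg_right (mul_le_mul_of_nonneg_left h2 hν.le) (sq_nonneg _)
        _ ≤ g' t := hlow t htne
    rw [← hsum]
    calc (ν / c) * X ^ s * ‖d‖ ^ 2 ≤ ν * X ^ s * ‖d‖ ^ 2 :=
          mul_le_mul_of_nonneg_right
            (mul_le_mul_of_nonneg_right (div_le_self hν.le hc1) hXs.le) (sq_nonneg _)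
      _ ≤ g 1 - g 0 := by linarith [key]
  · -- degenerate case: 0 ≤ s
    have hsge : 0 ≤ s := by rw [hs]; linarith
    have h0 : (0:ℝ) * (3/4 - 0) ≤ g (3/4) - g 0 := by
      refine mvt1 (g' := g') t₀ (by norm_num) hgcont.continuousOn
        (fun t ht htne => hgderiv t htne) ?_
      intro t ht htne
      refine le_trans ?_ (hlow t htne)
      positivity
    have hquarter : (ν * (X / 8) ^ s * ‖d‖ ^ 2) * (1 - 3/4) ≤ g 1 - g (3/4) := by
      refine mvt1 (g' := g') t₀ (by norm_num) hgcont.continuousOn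
        (fun t ht htne => hgderiv t htne) ?_
      intro t ht htne
      have h1 : X / 8 ≤ μ ^ 2 + ‖γ t‖ ^ 2 := by
        have hlo := hγlo t ⟨ht.1.le, ht.2.le⟩
        have hsq : ‖ξ‖ ^ 2 / 4 ≤ ‖γ t‖ ^ 2 := by
          nlinarith [norm_nonneg ξ, norm_nonneg (γ t)]
        have hsq2 : ‖ξ₀‖ ^ 2 ≤ ‖ξ‖ ^ 2 := by
          nlinarith [norm_nonneg ξ₀]
        rw [hXdef]
        nlinarith [sq_nonneg μ]
      have h2 : (X / 8) ^ s ≤ (μ ^ 2 + ‖γ t‖ ^ 2) ^ s :=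
        Real.rpow_le_rpow (by positivity) h1 hsge
      calc ν * (X / 8) ^ s * ‖d‖ ^ 2
          ≤ ν * (μ ^ 2 + ‖γ t‖ ^ 2) ^ s * ‖d‖ ^ 2 :=
            mul_le_mul_of_nonneg_right (mul_le_mul_of_nonneg_left h2 hν.le) (sq_nonneg _)
        _ ≤ g' t := hlow t htne
    rw [← hsum]
    have hdiv : ν / c ≤ ν / (4 * (8:ℝ) ^ s) := by
      rw [div_le_div_iff₀ hcpos (by positivity)]
      nlinarith [hν.le, h8]
    have hXs8 : (X / 8) ^ s = X ^ s / (8:ℝ) ^ s := Real.div_rpow hX.le (by norm_num) s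
    calc (ν / c) * X ^ s * ‖d‖ ^ 2 ≤ (ν / (4 * (8:ℝ) ^ s)) * X ^ s * ‖d‖ ^ 2 :=
          mul_le_mul_of_nonneg_right
            (mul_le_mul_of_nonneg_right hdiv (Real.rpow_nonneg hX.le s)) (sq_nonneg _)
      _ = (ν * (X / 8) ^ s * ‖d‖ ^ 2) * (1 - 3/4) := by
          rw [hXs8]; field_simp; ring
      _ ≤ g 1 - g (3/4) := hquarter
      _ ≤ g 1 - g 0 := by linarith [h0]




/-- Monotonicity of elliptic vector fields: there is `c = c(k, p) ≥ 1` such that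
any vector field `b : ℝ^k → ℝ^k`, continuous and differentiable away from the origin (everywhere
if `μ > 0`), whose derivative satisfies the growth and ellipticity bounds with constants
`0 < ν ≤ L`, satisfies the monotonicity inequality
`⟨b(ξ) − b(ξ₀), ξ − ξ₀⟩ ≥ (ν/c) (μ² + |ξ|² + |ξ₀|²)^{(p−2)/2} |ξ − ξ₀|²`. -/
theorem monotonicity_of_elliptic_vector_field (k : ℕ) (hk : 1 ≤ k) (p : ℝ) (hp : 1 < p) :
    ∃ c : ℝ, 1 ≤ c ∧ ∀ μ ν L : ℝ, 0 ≤ μ → μ ≤ 1 → 0 < ν → ν ≤ L →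
      ∀ (b : EuclideanSpace ℝ (Fin k) → EuclideanSpace ℝ (Fin k))
        (Db : EuclideanSpace ℝ (Fin k) →
          (EuclideanSpace ℝ (Fin k) →L[ℝ] EuclideanSpace ℝ (Fin k))),
        Continuous b →
        (∀ ξ : EuclideanSpace ℝ (Fin k), (ξ ≠ 0 ∨ 0 < μ) → HasFDerivAt b (Db ξ) ξ) →
        (∀ ξ : EuclideanSpace ℝ (Fin k), (ξ ≠ 0 ∨ 0 < μ) →
          ‖Db ξ‖ ≤ L * (μ ^ 2 + ‖ξ‖ ^ 2) ^ ((p - 2) / 2)) →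
        (∀ ξ : EuclideanSpace ℝ (Fin k), (ξ ≠ 0 ∨ 0 < μ) →
          ∀ ζ : EuclideanSpace ℝ (Fin k),
            ν * (μ ^ 2 + ‖ξ‖ ^ 2) ^ ((p - 2) / 2) * ‖ζ‖ ^ 2 ≤ (inner ℝ (Db ξ ζ) ζ : ℝ)) →
        ∀ ξ ξ₀ : EuclideanSpace ℝ (Fin k), ¬(μ = 0 ∧ ξ = 0 ∧ ξ₀ = 0) →
          (ν / c) * (μ ^ 2 + ‖ξ‖ ^ 2 + ‖ξ₀‖ ^ 2) ^ ((p - 2) / 2) * ‖ξ - ξ₀‖ ^ 2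
            ≤ (inner ℝ (b ξ - b ξ₀) (ξ - ξ₀) : ℝ) := by
  have h8 : (0:ℝ) < (8:ℝ) ^ ((p - 2) / 2) := Real.rpow_pos_of_pos (by norm_num) _
  refine ⟨4 * (8:ℝ) ^ ((p - 2) / 2) + 1, by nlinarith, ?_⟩
  intro μ ν L hμ hμ1 hν hνL b Db hb hb' hgrowth hell ξ ξ₀ hnz
  by_cases hne : ξ = ξ₀
  · subst hne
    simp
  have hX : 0 < μ ^ 2 + ‖ξ‖ ^ 2 + ‖ξ₀‖ ^ 2 := by
    rcases hμ.lt_or_eq with hμpos | hμ0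
    · nlinarith [sq_nonneg ‖ξ‖, sq_nonneg ‖ξ₀‖]
    · subst hμ0
      by_cases hξ : ξ = 0
      · have hξ₀ : ξ₀ ≠ 0 := by
          intro h; exact hnz ⟨rfl, hξ, h⟩
        have := norm_pos_iff.2 hξ₀
        nlinarith [sq_nonneg ‖ξ‖]
      · have := norm_pos_iff.2 hξ
        nlinarith [sq_nonneg ‖ξ₀‖]
  rcases le_total ‖ξ₀‖ ‖ξ‖ with hord | hord
  · exact aux_mono hν hb hb' hell ξ ξ₀ hne hord hX
  · have hX' : 0 < μ ^ 2 + ‖ξ₀‖ ^ 2 + ‖ξ‖ ^ 2 := by linarith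
    have h2 := aux_mono hν hb hb' hell ξ₀ ξ (Ne.symm hne) hord hX'
    have e1 : ‖ξ₀ - ξ‖ = ‖ξ - ξ₀‖ := norm_sub_rev _ _
    have e2 : (inner ℝ (b ξ₀ - b ξ) (ξ₀ - ξ) : ℝ) = inner ℝ (b ξ - b ξ₀) (ξ - ξ₀) := by
      rw [show ξ₀ - ξ = -(ξ - ξ₀) by abel, show b ξ₀ - b ξ = -(b ξ - b ξ₀) by abel,
        inner_neg_neg]
    have e3 : μ ^ 2 + ‖ξ₀‖ ^ 2 + ‖ξ‖ ^ 2 = μ ^ 2 + ‖ξ‖ ^ 2 + ‖ξ₀‖ ^ 2 := by ring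
    rw [e1, e2, e3] at h2
    exact h2
end

section
/- Let (X, μ) be a measure space, let h : X → [0, ∞] be measurable, and let 0 < p < q, c > 0 and λ₁ > 0. Then ∫_{λ₁}^{∞} λ^{q−p−1} ( ∫_{{x : h(x) > λ^p/c}} h dμ ) dλ ≤ (c^{(q−p)/p}/(q − p)) ∫_X h^{q/p} dμ. -/
open MeasureTheory
open scoped ENNReal

/-- For measurable `h : X → [0,∞]`, `0 < p < q`, `c > 0` and `λ₁ > 0`,
`∫_{λ₁}^∞ λ^{q−p−1} ∫_{{h > λ^p/c}} h dμ dλ ≤ (c^{(q−p)/p}/(q − p)) ∫_X h^{q/p} dμ`. -/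
theorem layer_cake_estimate_inhomogeneity (X : Type*) [MeasurableSpace X] (μ : Measure X)
    (h : X → ℝ≥0∞) (hh : Measurable h)
    (p q c lam₁ : ℝ) (hp : 0 < p) (hpq : p < q) (hc : 0 < c) (hlam₁ : 0 < lam₁) :
    (∫⁻ l in Set.Ioi lam₁, ENNReal.ofReal (l ^ (q - p - 1)) *
        ∫⁻ x in {x | ENNReal.ofReal (l ^ p / c) < h x}, h x ∂μ)
      ≤ ENNReal.ofReal (c ^ ((q - p) / p) / (q - p)) * ∫⁻ x, h x ^ (q / p) ∂μ := by
  have hqp : 0 < q - p := by linarith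
  have hqp' : (0:ℝ) < q / p := div_pos (by linarith) hp
  have hstop : MeasurableSet {x | h x = ∞} := hh (measurableSet_singleton ⊤)
  by_cases hinf : μ {x | h x = ∞} = 0
  swap
  · -- if `h = ∞` on a non-null set, the right-hand side is infinite
    have h1 : ∫⁻ x in {x | h x = ∞}, h x ^ (q / p) ∂μ = ∞ := by
      rw [setLIntegral_congr_fun hstop
        (fun x (hx : h x = ∞) => by
          rw [hx, ENNReal.top_rpow_of_pos hqp']), setLIntegral_const,
        ENNReal.top_mul hinf]
    have h2 : ∫⁻ x, h x ^ (q / p) ∂μ = ∞ :=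
      eq_top_mono (setLIntegral_le_lintegral _ _) h1
    rw [h2, ENNReal.mul_top (by
      simp only [ne_eq, ENNReal.ofReal_eq_zero, not_le]
      positivity)]
    exact le_top
  -- main case : `h < ∞` a.e.
  set ρ : Measure X := μ.withDensity h with hρ
  set f : X → ℝ := fun x => (c * (h x).toReal) ^ (1 / p) with hf
  have hf_nn : ∀ x, 0 ≤ f x := fun x => Real.rpow_nonneg (by positivity) _
  have hf_mble : Measurable f := by
    have : Measurable fun x => (h x).toReal := hh.ennreal_toReal
    fun_prop
  have hρinf : ρ {x | h x = ∞} = 0 := by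
    rw [hρ, withDensity_apply _ hstop, setLIntegral_measure_zero _ _ hinf]
  have hρae : ∀ᵐ x ∂ρ, h x ≠ ∞ := by
    rw [ae_iff]
    simpa using hρinf
  -- for finite `h x` and `t > 0`, the two conditions agree
  have hiff : ∀ t : ℝ, 0 < t → ∀ x : X, h x ≠ ∞ →
      (ENNReal.ofReal (t ^ p / c) < h x ↔ t < f x) := by
    intro t ht x hx
    rw [ENNReal.ofReal_lt_iff_lt_toReal (by positivity) hx, div_lt_iff₀ hc, mul_comm]
    constructor
    · intro h1
      have h2 : (t ^ p) ^ (1 / p) < (c * (h x).toReal) ^ (1 / p) :=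
        Real.rpow_lt_rpow (by positivity) h1 (by positivity)
      rwa [← Real.rpow_mul ht.le, mul_one_div, div_self hp.ne', Real.rpow_one] at h2
    · intro h1
      have h2 : t ^ p < (f x) ^ p := Real.rpow_lt_rpow ht.le h1 hp
      rwa [hf, ← Real.rpow_mul (by positivity), one_div_mul_cancel hp.ne',
        Real.rpow_one] at h2
  -- Step 1 : rewrite inner integrals as `ρ`-measures and identify the superlevel sets
  have step1 : (∫⁻ l in Set.Ioi lam₁, ENNReal.ofReal (l ^ (q - p - 1)) *
        ∫⁻ x in {x | ENNReal.ofReal (l ^ p / c) < h x}, h x ∂μ)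
      = ∫⁻ l in Set.Ioi lam₁, ρ {x | l < f x} * ENNReal.ofReal (l ^ (q - p - 1)) := by
    refine setLIntegral_congr_fun measurableSet_Ioi (fun l hl => ?_)
    have hl0 : 0 < l := hlam₁.trans hl
    rw [← withDensity_apply _ (measurableSet_lt measurable_const hh), ← hρ, mul_comm]
    congr 1
    apply measure_congr
    filter_upwards [hρae] with x hx
    exact eq_iff_iff.mpr (hiff l hl0 x hx)
  rw [step1]
  -- Step 2 : enlarge the domain of integration and apply the layer cake formula
  have step2 : (∫⁻ l in Set.Ioi lam₁, ρ {x | l < f x} * ENNReal.ofReal (l ^ (q - p - 1)))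
      ≤ ∫⁻ l in Set.Ioi 0, ρ {x | l < f x} * ENNReal.ofReal (l ^ (q - p - 1)) :=
    lintegral_mono' (Measure.restrict_mono (Set.Ioi_subset_Ioi hlam₁.le) le_rfl) le_rfl
  have lc := lintegral_comp_eq_lintegral_meas_lt_mul ρ (g := fun t => t ^ (q - p - 1))
    (ae_of_all _ hf_nn) hf_mble.aemeasurable
    (fun t ht => intervalIntegral.intervalIntegrable_rpow' (by linarith))
    (by
      filter_upwards [self_mem_ae_restrict measurableSet_Ioi] with t ht
      exact Real.rpow_nonneg (le_of_lt ht) _)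
  refine (step2.trans (le_of_eq lc.symm)).trans ?_
  -- Step 3 : compute the inner primitive and conclude
  have step3 : ∀ x : X, ENNReal.ofReal (∫ t in (0:ℝ)..f x, t ^ (q - p - 1))
      = ENNReal.ofReal (c ^ ((q - p) / p) / (q - p)) *
        ENNReal.ofReal ((h x).toReal ^ ((q - p) / p)) := by
    intro x
    rw [integral_rpow (Or.inl (by linarith)), Real.zero_rpow (by linarith)]
    have hfval : f x ^ (q - p - 1 + 1) = c ^ ((q - p) / p) * (h x).toReal ^ ((q - p) / p) := by
      rw [hf, ← Real.rpow_mul (by positivity), sub_add_cancel, one_div, inv_mul_eq_div,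
        Real.mul_rpow hc.le ENNReal.toReal_nonneg]
    rw [hfval, sub_add_cancel, sub_zero, mul_div_right_comm,
      ENNReal.ofReal_mul (by positivity)]
  calc (∫⁻ x, ENNReal.ofReal (∫ t in (0:ℝ)..f x, t ^ (q - p - 1)) ∂ρ)
      = ENNReal.ofReal (c ^ ((q - p) / p) / (q - p)) *
          ∫⁻ x, ENNReal.ofReal ((h x).toReal ^ ((q - p) / p)) ∂ρ := by
        rw [← lintegral_const_mul' _ _ ENNReal.ofReal_ne_top]
        exact lintegral_congr step3
    _ = ENNReal.ofReal (c ^ ((q - p) / p) / (q - p)) *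
          ∫⁻ x, h x * ENNReal.ofReal ((h x).toReal ^ ((q - p) / p)) ∂μ := by
        congr 1
        rw [hρ, lintegral_withDensity_eq_lintegral_mul μ hh (by fun_prop)]
        rfl
    _ ≤ ENNReal.ofReal (c ^ ((q - p) / p) / (q - p)) * ∫⁻ x, h x ^ (q / p) ∂μ := by
        refine mul_le_mul_right (lintegral_mono_ae ?_) _
        have hμae : ∀ᵐ x ∂μ, h x ≠ ∞ := by rw [ae_iff]; simpa using hinf
        filter_upwards [hμae] with x hx
        rcases eq_or_ne (h x) 0 with h0 | h0
        · simp [h0, Real.zero_rpow (by positivity : ((q:ℝ) - p) / p ≠ 0)]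
        · have htr : 0 < (h x).toReal := ENNReal.toReal_pos h0 hx
          rw [← ENNReal.ofReal_rpow_of_pos htr, ENNReal.ofReal_toReal hx]
          have : h x * h x ^ ((q - p) / p) = h x ^ (1 + (q - p) / p) := by
            rw [ENNReal.rpow_add _ _ h0 hx, ENNReal.rpow_one]
          rw [this]
          apply le_of_eq
          congr 1
          field_simp
          ring
end
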